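/- arXiv:1405.3951 — 4 statements merged into one kernel-verified Lean document; each statement's English description precedes it below -/
import Mathlib

section
/- Let V : Fin M → ℝ be injective (a non-degenerate potential), let κ > 0, and let H = -|φ₀⟩⟨φ₀| + κV where φ₀ is the normalized constant vector (1,...,1)/√M and V acts diagonally. Then a real number E with E ∉ {κ V(x) : x} is an eigenvalue of H if and only if (1/M) ∑_{x} 1/(κ V(x) - E) = 1, and in that case the vector ψ_E(x) = 1/(κ V(x) - E) is a corresponding eigenvector. -/
open Matrix BigOperators

theorem stmt_0 (M : ℕ) (hM : 1 ≤ M) (V : Fin M → ℝ) (hV : Function.Injective V)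
    (κ : ℝ) (hκ : 0 < κ)
    (φ₀ : Fin M → ℝ) (hφ₀ : ∀ x, φ₀ x = (Real.sqrt M)⁻¹)
    (H : Matrix (Fin M) (Fin M) ℝ)
    (hH : H = -(Matrix.vecMulVec φ₀ φ₀) + κ • Matrix.diagonal V)
    (E : ℝ) (hE : ∀ x, E ≠ κ * V x) :
    ((∃ ψ : Fin M → ℝ, ψ ≠ 0 ∧ H *ᵥ ψ = E • ψ) ↔
      (1 / (M : ℝ)) * ∑ x, (κ * V x - E)⁻¹ = 1) ∧
    ((1 / (M : ℝ)) * ∑ x, (κ * V x - E)⁻¹ = 1 →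
      H *ᵥ (fun x => (κ * V x - E)⁻¹) = E • (fun x => (κ * V x - E)⁻¹)) := by
  have hM0 : (0:ℝ) < M := by exact_mod_cast hM
  have hMs : (Real.sqrt M)⁻¹ * (Real.sqrt M)⁻¹ = (M:ℝ)⁻¹ := by
    rw [← mul_inv, Real.mul_self_sqrt (le_of_lt hM0)]
  have dx : ∀ x, κ * V x - E ≠ 0 := fun x => sub_ne_zero_of_ne (Ne.symm (hE x))
  have key : ∀ ψ : Fin M → ℝ, ∀ x, (H *ᵥ ψ) x
      = -((M:ℝ)⁻¹ * ∑ y, ψ y) + κ * (V x * ψ x) := by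
    intro ψ x
    subst hH
    simp only [Matrix.mulVec, dotProduct, Matrix.add_apply, Matrix.neg_apply,
      Matrix.vecMulVec_apply, Matrix.smul_apply, Matrix.diagonal_apply, hφ₀, smul_eq_mul]
    have step : ∀ y : Fin M,
        (-((Real.sqrt M)⁻¹ * (Real.sqrt M)⁻¹) + κ * (if x = y then V x else 0)) * ψ y
        = -((M:ℝ)⁻¹ * ψ y) + (if x = y then κ * (V x * ψ y) else 0) := by
      intro y
      rw [← hMs]
      by_cases h : x = y <;> simp [h] <;> ring
    rw [Finset.sum_congr rfl (fun y _ => step y), Finset.sum_add_distrib]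
    simp [Finset.sum_ite_eq, ← Finset.mul_sum, Finset.sum_neg_distrib]
  have entry : ∀ x, (-1 : ℝ) + κ * V x * (κ * V x - E)⁻¹ = E * (κ * V x - E)⁻¹ := by
    intro x
    have h1 : κ * V x * (κ * V x - E)⁻¹ - E * (κ * V x - E)⁻¹ = 1 := by
      rw [← sub_mul]; exact mul_inv_cancel₀ (dx x)
    linarith
  constructor
  · constructor
    · rintro ⟨ψ, hψ0, hψ⟩
      set c : ℝ := (M:ℝ)⁻¹ * ∑ y, ψ y with hc
      have heq : ∀ x, (κ * V x - E) * ψ x = c := by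
        intro x
        have := congrFun hψ x
        rw [key ψ x] at this
        simp only [Pi.smul_apply, smul_eq_mul] at this
        nlinarith [this]
      have hc0 : c ≠ 0 := by
        intro h
        apply hψ0
        funext x
        have := heq x
        rw [h] at this
        exact (mul_eq_zero.mp this).resolve_left (dx x)
      have hψx : ∀ x, ψ x = c * (κ * V x - E)⁻¹ := by
        intro x
        rw [← heq x, mul_comm (κ * V x - E) (ψ x), mul_assoc,
          mul_inv_cancel₀ (dx x), mul_one]
      have hsum : ∑ y, ψ y = c * ∑ x, (κ * V x - E)⁻¹ := by
        rw [Finset.mul_sum]; exact Finset.sum_congr rfl fun y _ => hψx y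
      have hMc : (M:ℝ) * c = c * ∑ x, (κ * V x - E)⁻¹ := by
        rw [← hsum, hc]; field_simp
      have h2 : ∑ x, (κ * V x - E)⁻¹ = (M:ℝ) := by
        have := mul_left_cancel₀ hc0
          (by linarith : c * (M:ℝ) = c * ∑ x, (κ * V x - E)⁻¹)
        linarith
      rw [h2]; field_simp
    · intro hsum
      refine ⟨fun x => (κ * V x - E)⁻¹, ?_, ?_⟩
      · intro h
        have := congrFun h ⟨0, hM⟩
        exact inv_ne_zero (dx ⟨0, hM⟩) this
      · funext x
        rw [key]
        have hs : (M:ℝ)⁻¹ * ∑ y, (κ * V y - E)⁻¹ = 1 := by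
          rw [← hsum]; ring
        rw [hs]
        simpa [mul_assoc] using entry x
  · intro hsum
    funext x
    rw [key]
    have hs : (M:ℝ)⁻¹ * ∑ y, (κ * V y - E)⁻¹ = 1 := by
      rw [← hsum]; ring
    rw [hs]
    simpa [mul_assoc] using entry x
end

section
/- Let H = -|φ₀⟩⟨φ₀| + κV be as above with V non-degenerate. Then for every z ∈ ℂ with Im z ≠ 0, ⟨φ₀, (H - z)⁻¹ φ₀⟩ = (F(z)⁻¹ - 1)⁻¹, where F(z) = (1/M) ∑_x 1/(κ V(x) - z). -/
open Matrix BigOperators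

theorem stmt_1 (M : ℕ) (hM : 1 ≤ M) (V : Fin M → ℝ) (hV : Function.Injective V)
    (κ : ℝ) (hκ : 0 < κ)
    (φ₀ : Fin M → ℂ) (hφ₀ : ∀ x, φ₀ x = ((Real.sqrt M : ℝ) : ℂ)⁻¹)
    (H : Matrix (Fin M) (Fin M) ℂ)
    (hH : H = -(Matrix.vecMulVec φ₀ (star φ₀)) + κ • Matrix.diagonal (fun x => (V x : ℂ)))
    (z : ℂ) (hz : z.im ≠ 0) :
    (star φ₀) ⬝ᵥ ((H - z • (1 : Matrix (Fin M) (Fin M) ℂ))⁻¹ *ᵥ φ₀) =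
      (((1 / (M : ℂ)) * ∑ x, ((κ : ℂ) * V x - z)⁻¹)⁻¹ - 1)⁻¹ := by
  have hM0 : (M : ℝ) ≠ 0 := by positivity
  set s : ℂ := ((Real.sqrt M : ℝ) : ℂ)⁻¹ with hs
  have hsreal : (starRingEnd ℂ) s = s := by
    simp [hs]
  have hs2 : s * s = (M : ℂ)⁻¹ := by
    rw [hs, ← mul_inv, ← Complex.ofReal_mul, Real.mul_self_sqrt (Nat.cast_nonneg M)]
    norm_num
  set d : Fin M → ℂ := fun x => (κ : ℂ) * V x - z with hd
  have hdne : ∀ x, d x ≠ 0 := by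
    intro x h
    apply hz
    have := congrArg Complex.im h
    simpa [hd] using this
  set F : ℂ := (1 / (M : ℂ)) * ∑ x, (d x)⁻¹ with hF
  -- imaginary part of F is nonzero
  have hFim : F.im ≠ 0 := by
    have h1 : F.im = (M : ℝ)⁻¹ * ∑ x, z.im * (Complex.normSq (d x))⁻¹ := by
      rw [hF, Complex.mul_im]
      have him : ∀ x, (d x)⁻¹.im = z.im * (Complex.normSq (d x))⁻¹ := by
        intro x
        rw [Complex.inv_im]
        simp [hd, neg_div, div_eq_mul_inv]
      simp only [Complex.im_sum, him]
      simp [Complex.ofReal_im, Complex.one_re, Complex.div_re, Complex.normSq,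
        Complex.natCast_im, Complex.natCast_re]

    rw [h1, ← Finset.mul_sum]
    have hpos : 0 < ∑ x : Fin M, (Complex.normSq (d x))⁻¹ := by
      apply Finset.sum_pos
      · intro x _
        exact inv_pos.mpr (Complex.normSq_pos.mpr (hdne x))
      · exact ⟨⟨0, by omega⟩, Finset.mem_univ _⟩
    intro h
    rcases mul_eq_zero.mp h with h' | h'
    · exact hM0 (inv_eq_zero.mp h')
    · rcases mul_eq_zero.mp h' with h'' | h''
      · exact hz h''
      · exact hpos.ne' h''
  have hF1 : (1 : ℂ) - F ≠ 0 := by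
    intro h
    have : F = 1 := by linear_combination -h
    apply hFim; rw [this]; simp
  have hF0 : F ≠ 0 := fun h => hFim (by rw [h]; simp)
  set A : Matrix (Fin M) (Fin M) ℂ := H - z • (1 : Matrix (Fin M) (Fin M) ℂ) with hA
  have hAmul : ∀ (w : Fin M → ℂ) (x : Fin M),
      (A *ᵥ w) x = -(s * s * ∑ y, w y) + d x * w x := by
    intro w x
    rw [hA, hH]
    simp only [Matrix.mulVec, dotProduct, Matrix.sub_apply, Matrix.add_apply,
      Matrix.neg_apply, Matrix.vecMulVec_apply, Matrix.smul_apply, Matrix.diagonal_apply,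
      Matrix.one_apply, Pi.star_apply, smul_eq_mul, RCLike.star_def, hφ₀, hsreal,
      Complex.real_smul]
    rw [show ∀ (f : Fin M → ℂ), (∑ y, f y) = ∑ y, f y from fun _ => rfl]
    calc (∑ y, ((-(s * s) + (κ : ℂ) * (if x = y then (V x : ℂ) else 0)) -
            z * (if x = y then 1 else 0)) * w y)
        = ∑ y, (-(s * s) * w y + (if x = y then d y * w y else 0)) := by
          refine Finset.sum_congr rfl fun y _ => ?_
          by_cases h : x = y <;> simp [h, hd] <;> ring
      _ = -(s * s * ∑ y, w y) + d x * w x := by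
          rw [Finset.sum_add_distrib, Finset.sum_ite_eq, if_pos (Finset.mem_univ x),
            ← Finset.mul_sum]
          ring
  -- A is invertible
  have hunit : IsUnit A := by
    rw [← Matrix.mulVec_injective_iff_isUnit]
    have hker : ∀ v : Fin M → ℂ, A *ᵥ v = 0 → v = 0 := by
      intro v hv
      set c : ℂ := ∑ y, v y with hc
      have hvx : ∀ x, v x = s * s * c * (d x)⁻¹ := by
        intro x
        have h0 := congrFun hv x
        rw [hAmul] at h0
        rw [Pi.zero_apply] at h0
        have h2 : d x * v x = s * s * c := by linear_combination h0
        field_simp [hdne x]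
        linear_combination h2
      have hcF : c = c * F := by
        calc c = ∑ y, v y := hc
          _ = ∑ y, s * s * c * (d y)⁻¹ := Finset.sum_congr rfl fun y _ => hvx y
          _ = s * s * c * ∑ y, (d y)⁻¹ := (Finset.mul_sum _ _ _).symm
          _ = c * F := by rw [hs2, hF]; ring
      have hc0 : c = 0 := by
        have h3 : c * (1 - F) = 0 := by linear_combination hcF
        rcases mul_eq_zero.mp h3 with h | h
        · exact h
        · exact absurd h hF1
      funext x
      rw [hvx x, hc0]
      simp
    intro u w h
    have := hker (u - w) (by rw [Matrix.mulVec_sub, h, sub_self])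
    exact sub_eq_zero.mp this
  set ψ : Fin M → ℂ := fun x => (1 - F)⁻¹ * s * (d x)⁻¹ with hψdef
  have hψ : A *ᵥ ψ = φ₀ := by
    funext x
    rw [hAmul, hφ₀]
    have hsum : ∑ y, ψ y = (1 - F)⁻¹ * s * ∑ y, (d y)⁻¹ := by
      rw [hψdef, ← Finset.mul_sum]
    rw [hsum, hψdef]
    have hMc : (M : ℂ) ≠ 0 := Nat.cast_ne_zero.mpr (by omega)
    have hFsum : ∑ y, (d y)⁻¹ = (M : ℂ) * F := by rw [hF]; field_simp
    have hcancel : d x * ((1 - F)⁻¹ * s * (d x)⁻¹) = (1 - F)⁻¹ * s := by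
      field_simp [hdne x]
    rw [hFsum, hcancel, hs2]
    field_simp
    ring
  have hsolve : (H - z • (1 : Matrix (Fin M) (Fin M) ℂ))⁻¹ *ᵥ φ₀ = ψ := by
    rw [← hA, ← hψ, Matrix.mulVec_mulVec,
      Matrix.nonsing_inv_mul A ((Matrix.isUnit_iff_isUnit_det A).mp hunit), Matrix.one_mulVec]
  rw [hsolve]
  have hdot : (star φ₀) ⬝ᵥ ψ = F * (1 - F)⁻¹ := by
    simp only [dotProduct, Pi.star_apply, hφ₀, RCLike.star_def, hsreal, hψdef]
    rw [show (∑ x, s * ((1 - F)⁻¹ * s * (d x)⁻¹)) = s * s * (1 - F)⁻¹ * ∑ x, (d x)⁻¹ by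
      rw [Finset.mul_sum]; exact Finset.sum_congr rfl fun x _ => by ring]
    rw [hs2, hF]
    have : (M:ℂ) ≠ 0 := by exact_mod_cast fun h => hM0 (by exact_mod_cast h)
    field_simp
  rw [hdot]
  rw [show F⁻¹ - 1 = (1 - F) * F⁻¹ by field_simp]
  rw [mul_inv, inv_inv]
  ring
end

section
/- Let F be a Herglotz–Pick function analytic on (-L, L) (representing measure supported in {|x| ≥ L}). Then for any W < L/10 and any u, u₀, u₁ ∈ [-W, W] with u ≠ u₀ and u₁ ≠ u₀: |(F(u) - F(u₀))/(u - u₀) - (F(u₁) - F(u₀))/(u₁ - u₀)| ≤ (6W/L) · (F(u₁) - F(u₀))/(u₁ - u₀). -/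
open MeasureTheory

lemma hg_absb {L W u x : ℝ} (hW : 0 < W) (hWL : W < L/10)
    (hu : u ∈ Set.Icc (-W) W) (hx : x ∉ Set.Ioo (-L) L) :
    (9/10)*L ≤ |x - u| ∧ (9/10)*|x| ≤ |x - u| := by
  obtain ⟨hu1, hu2⟩ := hu
  simp only [Set.mem_Ioo, not_and_or, not_lt] at hx
  rcases hx with h | h
  · have hxa : |x| = -x := abs_of_nonpos (by linarith)
    have hxu : |x - u| = -(x - u) := abs_of_nonpos (by linarith)
    constructor <;> rw [hxu] <;> [linarith; (rw [hxa]; linarith)]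
  · have hxa : |x| = x := abs_of_nonneg (by linarith)
    have hxu : |x - u| = x - u := abs_of_nonneg (by linarith)
    constructor <;> rw [hxu] <;> [linarith; (rw [hxa]; linarith)]

lemma hg_prodb {L W u v x : ℝ} (hW : 0 < W) (hWL : W < L/10)
    (hu : u ∈ Set.Icc (-W) W) (hv : v ∈ Set.Icc (-W) W) (hx : x ∉ Set.Ioo (-L) L) :
    0 < (x-u)*(x-v) ∧ (x-u)*(x-v) = |x - u| * |x - v| := by
  obtain ⟨hu1, hu2⟩ := hu
  obtain ⟨hv1, hv2⟩ := hv
  have hx' := hx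
  simp only [Set.mem_Ioo, not_and_or, not_lt] at hx'
  have hpos : 0 < (x-u)*(x-v) := by
    rcases hx' with h | h
    · exact mul_pos_of_neg_of_neg (by linarith) (by linarith)
    · exact mul_pos (by linarith) (by linarith)
  exact ⟨hpos, by rw [← abs_mul, abs_of_pos hpos]⟩

lemma hg_ae (μ : Measure ℝ) {s : Set ℝ} (h : μ s = 0) : ∀ᵐ x ∂μ, x ∉ s := by
  rw [ae_iff]; simp only [not_not, Set.setOf_mem_eq]; exact h

lemma hg_int_kernel {L W : ℝ} (hW : 0 < W) (hWL : W < L/10)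
    (μ : Measure ℝ) (hsupp : μ (Set.Ioo (-L) L) = 0)
    (hint : Integrable (fun x => (1 + x ^ 2)⁻¹) μ)
    {u v : ℝ} (hu : u ∈ Set.Icc (-W) W) (hv : v ∈ Set.Icc (-W) W) :
    Integrable (fun x => ((x-u)*(x-v))⁻¹) μ := by
  have hL : 0 < L := by linarith
  have hae : ∀ᵐ x ∂μ, x ∉ Set.Ioo (-L) L := by
    rw [ae_iff]; simp only [not_not, Set.setOf_mem_eq]; exact hsupp
  refine ((hint.const_mul ((100/81) * (1/L^2 + 1))).mono' ?_ ?_)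
  · exact (((measurable_id.sub_const u).mul (measurable_id.sub_const v)).inv).aestronglyMeasurable
  · filter_upwards [hae] with x hx
    obtain ⟨hP, hPe⟩ := hg_prodb hW hWL hu hv hx
    obtain ⟨hAu1, hAu2⟩ := hg_absb hW hWL hu hx
    obtain ⟨hAv1, hAv2⟩ := hg_absb hW hWL hv hx
    have hx2 : (0:ℝ) < 1 + x^2 := by positivity
    have hPL : (81/100)*L^2 ≤ (x-u)*(x-v) := by
      rw [hPe]; nlinarith [abs_nonneg (x-u), abs_nonneg (x-v)]
    have hPx : (81/100)*x^2 ≤ (x-u)*(x-v) := by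
      rw [hPe]
      nlinarith [mul_le_mul hAu2 hAv2 (by positivity) (abs_nonneg (x-u)), sq_abs x]
    have hL2 : (0:ℝ) < L^2 := by positivity
    have h3 : (81/100 : ℝ) ≤ 1/L^2 * ((x-u)*(x-v)) := by
      rw [div_mul_eq_mul_div, le_div_iff₀ hL2]; nlinarith
    rw [Real.norm_eq_abs, abs_of_pos (inv_pos.mpr hP), ← one_div, ← div_eq_mul_inv,
      div_le_div_iff₀ hP hx2]
    nlinarith [h3, hPx]

lemma hg_int_f {L W : ℝ} (hW : 0 < W) (hWL : W < L/10)
    (μ : Measure ℝ) (hsupp : μ (Set.Ioo (-L) L) = 0)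
    (hint : Integrable (fun x => (1 + x ^ 2)⁻¹) μ)
    {u : ℝ} (hu : u ∈ Set.Icc (-W) W) :
    Integrable (fun x => 1/(x-u) - x/(1+x^2)) μ := by
  have hL : 0 < L := by linarith
  have hae : ∀ᵐ x ∂μ, x ∉ Set.Ioo (-L) L := by
    rw [ae_iff]; simp only [not_not, Set.setOf_mem_eq]; exact hsupp
  refine ((hint.const_mul (10/(9*L) + (10/9)*W)).mono' ?_ ?_)
  · apply AEStronglyMeasurable.sub
    · exact ((measurable_const.div (measurable_id.sub_const u))).aestronglyMeasurable
    · exact (measurable_id.div ((measurable_const.add (measurable_id.pow_const 2)))).aestronglyMeasurable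
  · filter_upwards [hae] with x hx
    obtain ⟨hA1, hA2⟩ := hg_absb hW hWL hu hx
    have hApos : 0 < |x - u| := lt_of_lt_of_le (by positivity) hA1
    have hxu : x - u ≠ 0 := by
      intro h; rw [h, abs_zero] at hApos; exact lt_irrefl 0 hApos
    have hx2 : (0:ℝ) < 1 + x^2 := by positivity
    have heq : 1/(x-u) - x/(1+x^2) = (1+u*x)/((x-u)*(1+x^2)) := by
      field_simp; ring
    have habs : |1+u*x| ≤ 1 + W*|x| := by
      calc |1+u*x| ≤ |(1:ℝ)| + |u*x| := abs_add_le 1 (u*x)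
        _ ≤ 1 + W*|x| := by
            rw [abs_one, abs_mul]
            have : |u| ≤ W := abs_le.mpr ⟨hu.1, hu.2⟩
            nlinarith [abs_nonneg x]
    have h5 : (1:ℝ) ≤ 10/(9*L) * |x - u| := by
      rw [div_mul_eq_mul_div, le_div_iff₀ (by positivity)]; nlinarith
    have h6 : W*|x| ≤ (10/9)*W*|x - u| := by nlinarith
    have main : |1+u*x| ≤ (10/(9*L) + (10/9)*W) * |x - u| := by nlinarith
    rw [Real.norm_eq_abs, heq, abs_div, abs_mul, abs_of_pos hx2]
    rw [div_le_iff₀ (by positivity)]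
    have hre : (10/(9*L) + (10/9)*W) * (1+x^2)⁻¹ * (|x - u| * (1+x^2))
        = (10/(9*L) + (10/9)*W) * |x - u| := by
      field_simp
    rw [hre]; exact main

lemma hg_diffq (L W a b : ℝ) (hW : 0 < W) (hWL : W < L / 10)
    (μ : Measure ℝ) (hsupp : μ (Set.Ioo (-L) L) = 0)
    (hint : Integrable (fun x => (1 + x ^ 2)⁻¹) μ)
    (F : ℝ → ℝ)
    (hF : ∀ z : ℝ, F z = a * z + b + ∫ x, (1 / (x - z) - x / (1 + x ^ 2)) ∂μ)
    {u v : ℝ} (hu : u ∈ Set.Icc (-W) W) (hv : v ∈ Set.Icc (-W) W) (hne : u ≠ v) :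
    (F u - F v) / (u - v) = a + ∫ x, ((x-u)*(x-v))⁻¹ ∂μ := by
  have hL : 0 < L := by linarith
  have hae : ∀ᵐ x ∂μ, x ∉ Set.Ioo (-L) L := by
    rw [ae_iff]; simp only [not_not, Set.setOf_mem_eq]; exact hsupp
  have hfu : Integrable (fun x => 1/(x-u) - x/(1+x^2)) μ := hg_int_f hW hWL μ hsupp hint hu
  have hfv : Integrable (fun x => 1/(x-v) - x/(1+x^2)) μ := hg_int_f hW hWL μ hsupp hint hv
  have h2 : (∫ x, (1/(x-u) - x/(1+x^2)) ∂μ) - (∫ x, (1/(x-v) - x/(1+x^2)) ∂μ)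
      = (u - v) * ∫ x, ((x-u)*(x-v))⁻¹ ∂μ := by
    rw [← integral_sub hfu hfv, ← integral_const_mul]
    refine integral_congr_ae ?_
    filter_upwards [hae] with x hx
    obtain ⟨hAu1, _⟩ := hg_absb hW hWL hu hx
    obtain ⟨hAv1, _⟩ := hg_absb hW hWL hv hx
    have hxu : x - u ≠ 0 := by
      intro h; rw [h, abs_zero] at hAu1; nlinarith
    have hxv : x - v ≠ 0 := by
      intro h; rw [h, abs_zero] at hAv1; nlinarith
    have hx2 : (1:ℝ) + x^2 ≠ 0 := by positivity
    field_simp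
    ring
  have h3 : F u - F v = (u - v) * (a + ∫ x, ((x-u)*(x-v))⁻¹ ∂μ) := by
    rw [hF u, hF v]
    have : a * u + b + (∫ x, (1 / (x - u) - x / (1 + x ^ 2)) ∂μ)
        - (a * v + b + ∫ x, (1 / (x - v) - x / (1 + x ^ 2)) ∂μ)
        = a * (u - v) + ((∫ x, (1/(x-u) - x/(1+x^2)) ∂μ) - ∫ x, (1/(x-v) - x/(1+x^2)) ∂μ) := by
      norm_num; ring
    rw [this, h2]; ring
  rw [h3, mul_comm, mul_div_assoc, div_self (sub_ne_zero.mpr hne), mul_one]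

theorem stmt_4 (L W a b : ℝ) (hW : 0 < W) (hWL : W < L / 10) (ha : 0 ≤ a)
    (μ : Measure ℝ)
    (hsupp : μ (Set.Ioo (-L) L) = 0)
    (hint : Integrable (fun x => (1 + x ^ 2)⁻¹) μ)
    (F : ℝ → ℝ)
    (hF : ∀ z : ℝ, F z = a * z + b + ∫ x, (1 / (x - z) - x / (1 + x ^ 2)) ∂μ) :
    ∀ u ∈ Set.Icc (-W) W, ∀ u₀ ∈ Set.Icc (-W) W, ∀ u₁ ∈ Set.Icc (-W) W,
      u ≠ u₀ → u₁ ≠ u₀ →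
      |(F u - F u₀) / (u - u₀) - (F u₁ - F u₀) / (u₁ - u₀)| ≤
        (6 * W / L) * ((F u₁ - F u₀) / (u₁ - u₀)) := by
  intro u hu u₀ hu₀ u₁ hu₁ hne hne₁
  have hL : 0 < L := by linarith
  have hae : ∀ᵐ x ∂μ, x ∉ Set.Ioo (-L) L := by
    rw [ae_iff]; simp only [not_not, Set.setOf_mem_eq]; exact hsupp
  have hq := hg_diffq L W a b hW hWL μ hsupp hint F hF hu hu₀ hne
  have hq₁ := hg_diffq L W a b hW hWL μ hsupp hint F hF hu₁ hu₀ hne₁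
  rw [hq, hq₁]
  set I : ℝ := ∫ x, ((x-u)*(x-u₀))⁻¹ ∂μ with hI
  set I₁ : ℝ := ∫ x, ((x-u₁)*(x-u₀))⁻¹ ∂μ with hI₁
  have hki : Integrable (fun x => ((x-u)*(x-u₀))⁻¹) μ := hg_int_kernel hW hWL μ hsupp hint hu hu₀
  have hki₁ : Integrable (fun x => ((x-u₁)*(x-u₀))⁻¹) μ := hg_int_kernel hW hWL μ hsupp hint hu₁ hu₀
  have hI₁nn : 0 ≤ I₁ := by
    refine integral_nonneg_of_ae ?_
    filter_upwards [hae] with x hx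
    exact le_of_lt (inv_pos.mpr (hg_prodb hW hWL hu₁ hu₀ hx).1)
  -- pointwise bound for the difference of kernels
  have hpt : ∀ᵐ x ∂μ, |((x-u)*(x-u₀))⁻¹ - ((x-u₁)*(x-u₀))⁻¹|
      ≤ (20*W/(9*L)) * ((x-u₁)*(x-u₀))⁻¹ := by
    filter_upwards [hae] with x hx
    obtain ⟨hAu1, _⟩ := hg_absb hW hWL hu hx
    obtain ⟨hAu11, _⟩ := hg_absb hW hWL hu₁ hx
    obtain ⟨hAu01, _⟩ := hg_absb hW hWL hu₀ hx
    have hxu : x - u ≠ 0 := by intro h; rw [h, abs_zero] at hAu1; nlinarith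
    have hxu₁ : x - u₁ ≠ 0 := by intro h; rw [h, abs_zero] at hAu11; nlinarith
    have hxu₀ : x - u₀ ≠ 0 := by intro h; rw [h, abs_zero] at hAu01; nlinarith
    have hBC : 0 < (x-u₁)*(x-u₀) := (hg_prodb hW hWL hu₁ hu₀ hx).1
    have heq : ((x-u)*(x-u₀))⁻¹ - ((x-u₁)*(x-u₀))⁻¹
        = (u-u₁) * ((x-u)⁻¹ * ((x-u₁)*(x-u₀))⁻¹) := by
      field_simp
      ring
    rw [heq, abs_mul, abs_mul, abs_inv, abs_of_pos (inv_pos.mpr hBC)]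
    have h1 : |u - u₁| ≤ 2*W := by
      have := abs_sub_abs_le_abs_sub u u₁
      have h2 : |u| ≤ W := abs_le.mpr ⟨hu.1, hu.2⟩
      have h3 : |u₁| ≤ W := abs_le.mpr ⟨hu₁.1, hu₁.2⟩
      calc |u - u₁| ≤ |u| + |u₁| := abs_sub _ _
        _ ≤ 2*W := by linarith
    have h2 : |x - u|⁻¹ ≤ ((9/10)*L)⁻¹ := by
      apply inv_anti₀ (by positivity) hAu1
    have h4 : |u - u₁| * |x - u|⁻¹ ≤ 20*W/(9*L) := by
      have := mul_le_mul h1 h2 (by positivity) (by positivity)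
      calc |u - u₁| * |x - u|⁻¹ ≤ 2*W * ((9/10)*L)⁻¹ := this
        _ = 20*W/(9*L) := by field_simp; ring
    calc |u - u₁| * (|x - u|⁻¹ * ((x-u₁)*(x-u₀))⁻¹)
        = (|u - u₁| * |x - u|⁻¹) * ((x-u₁)*(x-u₀))⁻¹ := by ring
      _ ≤ (20*W/(9*L)) * ((x-u₁)*(x-u₀))⁻¹ :=
          mul_le_mul_of_nonneg_right h4 (le_of_lt (inv_pos.mpr hBC))
  have hmain : |I - I₁| ≤ (20*W/(9*L)) * I₁ := by
    rw [hI, hI₁, ← integral_sub hki hki₁]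
    calc |∫ x, (((x-u)*(x-u₀))⁻¹ - ((x-u₁)*(x-u₀))⁻¹) ∂μ|
        ≤ ∫ x, |((x-u)*(x-u₀))⁻¹ - ((x-u₁)*(x-u₀))⁻¹| ∂μ :=
          by
          simpa [Real.norm_eq_abs] using
            norm_integral_le_integral_norm (fun x => ((x-u)*(x-u₀))⁻¹ - ((x-u₁)*(x-u₀))⁻¹) (μ := μ)
      _ ≤ ∫ x, (20*W/(9*L)) * ((x-u₁)*(x-u₀))⁻¹ ∂μ := by
          refine integral_mono_ae ((hki.sub hki₁).abs) (hki₁.const_mul _) hpt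
      _ = (20*W/(9*L)) * I₁ := by rw [integral_const_mul]
  have hc : 20*W/(9*L) ≤ 6*W/L := by
    rw [div_le_div_iff₀ (by positivity) hL]
    nlinarith
  have h6 : (0:ℝ) ≤ 6*W/L := by positivity
  have : a + I - (a + I₁) = I - I₁ := by ring
  rw [this]
  calc |I - I₁| ≤ (20*W/(9*L)) * I₁ := hmain
    _ ≤ (6*W/L) * I₁ := mul_le_mul_of_nonneg_right hc hI₁nn
    _ ≤ (6*W/L) * (a + I₁) := by nlinarith
end

section
/- Let ρ(v) = (2π)^{-1/2} e^{-v²/2}. There exist constants 0 < c, C < ∞ such that for every 0 < δ ≤ 1 and every v ∈ ℝ: c/(1+|v|)² ≤ ∫_{|u-v| ≥ δ} ρ(u)/|u-v|² du ≤ C·(ρ(v)/δ + 1/(1+|v|)²). -/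
open MeasureTheory Set Filter Topology

lemma invsq_Ioi (v c : ℝ) (h : v < c) :
    IntegrableOn (fun u : ℝ => ((u - v) ^ 2)⁻¹) (Set.Ioi c) ∧
      (∫ u in Set.Ioi c, ((u - v) ^ 2)⁻¹) = (c - v)⁻¹ := by
  have hderiv : ∀ x ∈ Set.Ici c, HasDerivAt (fun u : ℝ => -(u - v)⁻¹) (((x - v) ^ 2)⁻¹) x := by
    intro x hx
    have hx0 : x - v ≠ 0 := sub_ne_zero.2 (ne_of_gt (h.trans_le hx))
    have h1 : HasDerivAt (fun u : ℝ => u - v) 1 x := (hasDerivAt_id x).sub_const v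
    have h2 := (h1.inv hx0).neg
    convert h2 using 1
    · rfl
    · rfl
    · rfl
    · ring
  have htend : Tendsto (fun u : ℝ => -(u - v)⁻¹) atTop (𝓝 0) := by
    have : Tendsto (fun u : ℝ => u - v) atTop atTop :=
      tendsto_atTop_add_const_right atTop (-v) tendsto_id
    simpa using (this.inv_tendsto_atTop).neg
  have hpos : ∀ x ∈ Set.Ioi c, 0 ≤ ((x - v) ^ 2)⁻¹ := fun x _ => by positivity
  have hint : IntegrableOn (fun u : ℝ => ((u - v) ^ 2)⁻¹) (Set.Ioi c) :=
    integrableOn_Ioi_deriv_of_nonneg' hderiv hpos htend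
  refine ⟨hint, ?_⟩
  rw [integral_Ioi_of_hasDerivAt_of_tendsto' hderiv hint htend]
  simp

lemma invsq_Iic (v δ : ℝ) (hδ : 0 < δ) :
    IntegrableOn (fun u : ℝ => ((u - v) ^ 2)⁻¹) (Set.Iic (v - δ)) ∧
      (∫ u in Set.Iic (v - δ), ((u - v) ^ 2)⁻¹) = δ⁻¹ := by
  have A : MeasurableEmbedding (fun x : ℝ => -x) :=
    (Homeomorph.neg ℝ).isClosedEmbedding.measurableEmbedding
  obtain ⟨hint, hval⟩ := invsq_Ioi (-v) (δ - v) (by linarith)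
  constructor
  · have hmap : volume.restrict (Set.Iic (v - δ)) =
        ((volume.restrict ((fun x : ℝ => -x) ⁻¹' Set.Iic (v - δ)))).map (fun x : ℝ => -x) := by
      nth_rewrite 1 [← Measure.map_neg_eq_self (volume : Measure ℝ)]
      exact Measure.restrict_map measurable_neg measurableSet_Iic
    have hpre : ((fun x : ℝ => -x) ⁻¹' Set.Iic (v - δ)) = Set.Ici (δ - v) := by
      ext x; simp only [Set.mem_preimage, Set.mem_Iic, Set.mem_Ici]
      constructor <;> intro <;> linarith
    rw [IntegrableOn, hmap, A.integrable_map_iff, hpre]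
    have hcomp : ((fun u : ℝ => ((u - v) ^ 2)⁻¹) ∘ (fun x : ℝ => -x))
        = fun x : ℝ => ((x - -v) ^ 2)⁻¹ := by
      funext x; simp only [Function.comp]; congr 1; ring
    rw [hcomp]
    exact (integrableOn_Ici_iff_integrableOn_Ioi (f := fun x : ℝ => ((x - -v) ^ 2)⁻¹)).2 hint
  · have h1 : (∫ u in Set.Iic (v - δ), ((u - v) ^ 2)⁻¹)
        = ∫ u in Set.Iic (v - δ), ((-u - -v) ^ 2)⁻¹ := by
      refine setIntegral_congr_fun measurableSet_Iic fun x _ => ?_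
      congr 1; ring
    have h2 : (∫ u in Set.Iic (v - δ), ((-u - -v) ^ 2)⁻¹)
        = ∫ x in Set.Ioi (-(v - δ)), ((x - -v) ^ 2)⁻¹ :=
      integral_comp_neg_Iic (v - δ) (fun x : ℝ => ((x - -v) ^ 2)⁻¹)
    rw [h1, h2, show -(v - δ) = δ - v by ring, hval]
    simp

lemma invsq_set (v a : ℝ) (ha : 0 < a) :
    IntegrableOn (fun u : ℝ => ((u - v) ^ 2)⁻¹) {u : ℝ | a ≤ |u - v|} ∧
      (∫ u in {u : ℝ | a ≤ |u - v|}, ((u - v) ^ 2)⁻¹) = 2 / a := by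
  have hseq : {u : ℝ | a ≤ |u - v|} = Set.Iic (v - a) ∪ Set.Ici (v + a) := by
    ext u
    simp only [Set.mem_setOf_eq, Set.mem_union, Set.mem_Iic, Set.mem_Ici, le_abs]
    constructor
    · rintro (h | h)
      · right; linarith
      · left; linarith
    · rintro (h | h)
      · right; linarith
      · left; linarith
  have hIoi := invsq_Ioi v (v + a) (by linarith)
  have hIic := invsq_Iic v a ha
  have hIci : IntegrableOn (fun u : ℝ => ((u - v) ^ 2)⁻¹) (Set.Ici (v + a)) :=
    (integrableOn_Ici_iff_integrableOn_Ioi (f := fun u : ℝ => ((u - v) ^ 2)⁻¹)).2 hIoi.1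
  have hdisj : Disjoint (Set.Iic (v - a)) (Set.Ici (v + a)) := by
    rw [Set.disjoint_left]
    intro x hx hx'
    simp only [Set.mem_Iic, Set.mem_Ici] at hx hx'
    linarith
  constructor
  · rw [hseq]; exact hIic.1.union hIci
  · rw [hseq, setIntegral_union hdisj measurableSet_Ici hIic.1 hIci, hIic.2,
      integral_Ici_eq_integral_Ioi, hIoi.2, show v + a - v = a by ring]
    rw [eq_div_iff (ne_of_gt ha)]
    field_simp
    norm_num

lemma expbound (x : ℝ) (hx : 0 ≤ x) :
    (1 + x) ^ 3 ≤ 13824 * Real.exp ((max (x - 1) 0) ^ 2 / 8) := by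
  rcases le_total x 3 with h3 | h3
  · have h1 : (1 + x) ^ 3 ≤ 64 := by nlinarith [sq_nonneg x, sq_nonneg (1+x)]
    have h2 : (1 : ℝ) ≤ Real.exp ((max (x - 1) 0) ^ 2 / 8) :=
      Real.one_le_exp (by positivity)
    nlinarith
  · rw [max_eq_left (by linarith)]
    set q : ℝ := (x - 1) ^ 2 / 24 with hq
    have hq0 : 0 ≤ q := by positivity
    have he : Real.exp ((x - 1) ^ 2 / 8) = Real.exp q ^ (3 : ℕ) := by
      rw [← Real.exp_nat_mul]
      congr 1
      push_cast
      ring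
    have h1 : q ≤ Real.exp q := by
      have := Real.add_one_le_exp q
      linarith
    have h2 : q ^ 3 ≤ Real.exp q ^ 3 := pow_le_pow_left₀ hq0 h1 3
    have h4 : (1 + x) ^ 3 ≤ 13824 * q ^ 3 := by
      have h5 : 1 + x ≤ (x - 1) ^ 2 := by nlinarith
      have h6 : (1 + x) ^ 3 ≤ ((x - 1) ^ 2) ^ 3 := pow_le_pow_left₀ (by linarith) h5 3
      have : 13824 * q ^ 3 = ((x - 1) ^ 2) ^ 3 := by
        rw [hq]; ring
      linarith
    rw [he]
    calc (1 + x) ^ 3 ≤ 13824 * q ^ 3 := h4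
      _ ≤ 13824 * Real.exp q ^ 3 := by linarith
set_option maxHeartbeats 1000000 in
theorem stmt_6 (ρ : ℝ → ℝ)
    (hρ : ∀ v : ℝ, ρ v = (Real.sqrt (2 * Real.pi))⁻¹ * Real.exp (-(v ^ 2) / 2)) :
    ∃ c C : ℝ, 0 < c ∧ 0 < C ∧
      ∀ δ v : ℝ, 0 < δ → δ ≤ 1 →
        c / (1 + |v|) ^ 2 ≤ ∫ u in {u : ℝ | δ ≤ |u - v|}, ρ u / |u - v| ^ 2 ∧
        (∫ u in {u : ℝ | δ ≤ |u - v|}, ρ u / |u - v| ^ 2) ≤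
          C * (ρ v / δ + 1 / (1 + |v|) ^ 2) := by
  have hpi : (0:ℝ) < Real.sqrt (2 * Real.pi) := Real.sqrt_pos.2 (by positivity)
  refine ⟨(Real.sqrt (2 * Real.pi))⁻¹ * Real.exp (-2) / 4, 27652, by positivity, by norm_num, ?_⟩
  intro δ v hδ hδ1
  have hρ0 : ∀ u : ℝ, 0 ≤ ρ u := fun u => by rw [hρ]; positivity
  have hv0 : (0:ℝ) < 1 + |v| := by positivity
  have hρmeas : Measurable ρ := by
    have : ρ = fun u : ℝ => (Real.sqrt (2 * Real.pi))⁻¹ * Real.exp (-(u ^ 2) / 2) := funext hρ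
    rw [this]; fun_prop
  have hfmeas : Measurable (fun u : ℝ => ρ u / |u - v| ^ 2) := by
    apply hρmeas.div
    fun_prop
  have hρint : Integrable ρ := by
    have h1 : Integrable (fun x : ℝ =>
        (Real.sqrt (2 * Real.pi))⁻¹ * Real.exp (-(1/2 : ℝ) * x ^ 2)) :=
      (integrable_exp_neg_mul_sq (by norm_num)).const_mul _
    exact h1.congr (Filter.Eventually.of_forall fun x => by rw [hρ]; ring_nf)
  have hSmeas : ∀ a : ℝ, MeasurableSet {u : ℝ | a ≤ |u - v|} := fun a =>
    measurableSet_le measurable_const (by fun_prop)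
  have key : ∀ a : ℝ, 0 < a →
      IntegrableOn (fun u : ℝ => ρ u / |u - v| ^ 2) {u : ℝ | a ≤ |u - v|} := by
    intro a ha
    refine Integrable.mono' ((hρint.const_mul (a ^ 2)⁻¹).integrableOn)
      hfmeas.aestronglyMeasurable.restrict ?_
    filter_upwards [ae_restrict_mem (hSmeas a)] with u hu
    have h1 : a ≤ |u - v| := hu
    have h2 : a ^ 2 ≤ |u - v| ^ 2 := by nlinarith [abs_nonneg (u - v)]
    have h3 : 0 ≤ ρ u / |u - v| ^ 2 := div_nonneg (hρ0 u) (by positivity)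
    rw [Real.norm_eq_abs, abs_of_nonneg h3]
    calc ρ u / |u - v| ^ 2 ≤ ρ u / a ^ 2 := by gcongr; exact hρ0 u
      _ = (a ^ 2)⁻¹ * ρ u := by ring
  have hf0 : ∀ u : ℝ, 0 ≤ ρ u / |u - v| ^ 2 := fun u =>
    div_nonneg (hρ0 u) (by positivity)
  constructor
  · -- lower bound
    obtain ⟨a, hJ⟩ : ∃ a : ℝ, ∀ u ∈ Set.Icc a (a + 1),
        1 ≤ |u - v| ∧ |u - v| ≤ 2 * (1 + |v|) ∧ u ^ 2 ≤ 4 := by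
      rcases le_total 0 v with hv | hv
      · refine ⟨-2, fun u hu => ?_⟩
        obtain ⟨h1, h2⟩ := hu
        rw [abs_of_nonpos (by linarith : u - v ≤ 0), abs_of_nonneg hv]
        refine ⟨by linarith, by linarith, by nlinarith⟩
      · refine ⟨1, fun u hu => ?_⟩
        obtain ⟨h1, h2⟩ := hu
        rw [abs_of_nonneg (by linarith : 0 ≤ u - v), abs_of_nonpos hv]
        refine ⟨by linarith, by linarith, by nlinarith⟩
    have hJS : Set.Icc a (a + 1) ⊆ {u : ℝ | δ ≤ |u - v|} := fun u hu =>
      le_trans hδ1 (hJ u hu).1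
    have hlow : ∀ u ∈ Set.Icc a (a + 1),
        (Real.sqrt (2 * Real.pi))⁻¹ * Real.exp (-2) / (2 * (1 + |v|)) ^ 2
          ≤ ρ u / |u - v| ^ 2 := by
      intro u hu
      obtain ⟨h1, h2, h3⟩ := hJ u hu
      rw [hρ u]
      have he : Real.exp (-2) ≤ Real.exp (-(u ^ 2) / 2) :=
        Real.exp_le_exp.2 (by linarith)
      have hd : |u - v| ^ 2 ≤ (2 * (1 + |v|)) ^ 2 := by nlinarith [abs_nonneg (u - v)]
      exact div_le_div₀ (by positivity)
        (mul_le_mul_of_nonneg_left he (by positivity)) (by nlinarith) hd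
    have hvol : volume (Set.Icc a (a + 1)) ≠ ⊤ := by
      simp [Real.volume_Icc]
    calc (Real.sqrt (2 * Real.pi))⁻¹ * Real.exp (-2) / 4 / (1 + |v|) ^ 2
        = (Real.sqrt (2 * Real.pi))⁻¹ * Real.exp (-2) / (2 * (1 + |v|)) ^ 2
            * (volume (Set.Icc a (a + 1))).toReal := by
          rw [Real.volume_Icc, show a + 1 - a = (1:ℝ) by ring]
          simp only [ENNReal.ofReal_one, ENNReal.toReal_one, mul_one]
          rw [div_div]
          congr 1
          ring
      _ ≤ ∫ u in Set.Icc a (a + 1), ρ u / |u - v| ^ 2 :=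
          by have := setIntegral_ge_of_const_le_real measurableSet_Icc hvol hlow
                ((key δ hδ).mono_set hJS)
             rwa [measureReal_def] at this
      _ ≤ ∫ u in {u : ℝ | δ ≤ |u - v|}, ρ u / |u - v| ^ 2 :=
          setIntegral_mono_set (key δ hδ)
            (Filter.Eventually.of_forall hf0) (Filter.Eventually.of_forall hJS)
  · -- upper bound
    obtain ⟨r, hrdef⟩ : ∃ r : ℝ, r = (1 + |v|)⁻¹ := ⟨_, rfl⟩
    have hr : (0:ℝ) < r := by rw [hrdef]; positivity
    have hr1 : r ≤ 1 := by
      rw [hrdef]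
      exact inv_le_one_of_one_le₀ (by linarith [abs_nonneg v])
    have hfiS := key δ hδ
    have hfiB := key r hr
    have hAmeas : MeasurableSet ({u : ℝ | δ ≤ |u - v|} ∩ {u : ℝ | |u - v| < r}) :=
      (hSmeas δ).inter (measurableSet_lt (by fun_prop) measurable_const)
    have hAsub : {u : ℝ | δ ≤ |u - v|} ∩ {u : ℝ | |u - v| < r} ⊆ {u : ℝ | δ ≤ |u - v|} :=
      Set.inter_subset_left
    have hsplit : (∫ u in {u : ℝ | δ ≤ |u - v|}, ρ u / |u - v| ^ 2) ≤
        (∫ u in {u : ℝ | δ ≤ |u - v|} ∩ {u : ℝ | |u - v| < r}, ρ u / |u - v| ^ 2)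
        + ∫ u in {u : ℝ | r ≤ |u - v|}, ρ u / |u - v| ^ 2 := by
      have hunion : {u : ℝ | δ ≤ |u - v|} =
          ({u : ℝ | δ ≤ |u - v|} ∩ {u : ℝ | |u - v| < r}) ∪
          ({u : ℝ | δ ≤ |u - v|} ∩ {u : ℝ | r ≤ |u - v|}) := by
        ext u
        simp only [Set.mem_setOf_eq, Set.mem_inter_iff, Set.mem_union]
        rcases lt_or_ge (|u - v|) r with h | h
        · tauto
        · tauto
      have hdisj : Disjoint ({u : ℝ | δ ≤ |u - v|} ∩ {u : ℝ | |u - v| < r})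
          ({u : ℝ | δ ≤ |u - v|} ∩ {u : ℝ | r ≤ |u - v|}) := by
        rw [Set.disjoint_left]
        rintro x ⟨-, h1⟩ ⟨-, h2⟩
        simp only [Set.mem_setOf_eq] at h1 h2
        exact absurd h2 (not_le.2 h1)
      calc (∫ u in {u : ℝ | δ ≤ |u - v|}, ρ u / |u - v| ^ 2)
          = ∫ u in ({u : ℝ | δ ≤ |u - v|} ∩ {u : ℝ | |u - v| < r}) ∪
              ({u : ℝ | δ ≤ |u - v|} ∩ {u : ℝ | r ≤ |u - v|}), ρ u / |u - v| ^ 2 := by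
            rw [← hunion]
        _ = (∫ u in {u : ℝ | δ ≤ |u - v|} ∩ {u : ℝ | |u - v| < r}, ρ u / |u - v| ^ 2)
            + ∫ u in {u : ℝ | δ ≤ |u - v|} ∩ {u : ℝ | r ≤ |u - v|}, ρ u / |u - v| ^ 2 :=
            setIntegral_union hdisj ((hSmeas δ).inter (hSmeas r))
              (hfiS.mono_set hAsub) (hfiS.mono_set Set.inter_subset_left)
        _ ≤ _ := by
            apply add_le_add le_rfl
            exact setIntegral_mono_set hfiB (Filter.Eventually.of_forall hf0)
              (Filter.Eventually.of_forall Set.inter_subset_right)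
    have hnear : (∫ u in {u : ℝ | δ ≤ |u - v|} ∩ {u : ℝ | |u - v| < r}, ρ u / |u - v| ^ 2)
        ≤ 6 * ρ v / δ := by
      have hinvδ := invsq_set v δ hδ
      have hp : ∀ u ∈ {u : ℝ | δ ≤ |u - v|} ∩ {u : ℝ | |u - v| < r},
          ρ u / |u - v| ^ 2 ≤ 3 * ρ v * ((u - v) ^ 2)⁻¹ := by
        rintro u ⟨h1, h2⟩
        simp only [Set.mem_setOf_eq] at h1 h2
        rw [hrdef] at h2
        have hru : |u - v| * (1 + |v|) < 1 := by
          calc |u - v| * (1 + |v|) < (1 + |v|)⁻¹ * (1 + |v|) := by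
                exact mul_lt_mul_of_pos_right h2 hv0
            _ = 1 := inv_mul_cancel₀ (ne_of_gt hv0)
        have hu' : |u| ≤ |v| + |u - v| := by
          have := abs_sub_abs_le_abs_sub u v
          linarith
        have hsq : v ^ 2 - u ^ 2 ≤ 2 := by
          have e1 : v ^ 2 - u ^ 2 ≤ |u - v| * (|v| + |u|) := by
            calc v ^ 2 - u ^ 2 = (v - u) * (v + u) := by ring
              _ ≤ |(v - u) * (v + u)| := le_abs_self _
              _ = |v - u| * |v + u| := abs_mul _ _
              _ = |u - v| * |v + u| := by rw [abs_sub_comm]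
              _ ≤ |u - v| * (|v| + |u|) := by
                  apply mul_le_mul_of_nonneg_left (abs_add_le _ _) (abs_nonneg _)
          nlinarith [abs_nonneg (u - v), abs_nonneg v, abs_nonneg u,
            h2.le.trans (by rw [← hrdef]; exact hr1 : (1 + |v|)⁻¹ ≤ 1)]
        have hρu : ρ u ≤ 3 * ρ v := by
          rw [hρ u, hρ v]
          have hee : Real.exp (-(u ^ 2) / 2) ≤ 3 * Real.exp (-(v ^ 2) / 2) := by
            calc Real.exp (-(u ^ 2) / 2) ≤ Real.exp (1 + -(v ^ 2) / 2) :=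
                Real.exp_le_exp.2 (by linarith)
              _ = Real.exp 1 * Real.exp (-(v ^ 2) / 2) := Real.exp_add _ _
              _ ≤ 3 * Real.exp (-(v ^ 2) / 2) := by
                  apply mul_le_mul_of_nonneg_right _ (Real.exp_pos _).le
                  exact le_of_lt (lt_of_lt_of_le Real.exp_one_lt_d9 (by norm_num))
          calc (Real.sqrt (2 * Real.pi))⁻¹ * Real.exp (-(u ^ 2) / 2)
              ≤ (Real.sqrt (2 * Real.pi))⁻¹ * (3 * Real.exp (-(v ^ 2) / 2)) :=
                mul_le_mul_of_nonneg_left hee (by positivity)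
            _ = 3 * ((Real.sqrt (2 * Real.pi))⁻¹ * Real.exp (-(v ^ 2) / 2)) := by ring
        rw [sq_abs, div_eq_mul_inv]
        exact mul_le_mul_of_nonneg_right hρu (by positivity)
      have h3ρ : 0 ≤ 3 * ρ v := by linarith [hρ0 v]
      calc (∫ u in {u : ℝ | δ ≤ |u - v|} ∩ {u : ℝ | |u - v| < r}, ρ u / |u - v| ^ 2)
          ≤ ∫ u in {u : ℝ | δ ≤ |u - v|} ∩ {u : ℝ | |u - v| < r},
              3 * ρ v * ((u - v) ^ 2)⁻¹ :=
            setIntegral_mono_on (hfiS.mono_set hAsub)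
              (IntegrableOn.mono_set (hinvδ.1.const_mul (3 * ρ v)) hAsub) hAmeas hp
        _ ≤ ∫ u in {u : ℝ | δ ≤ |u - v|}, 3 * ρ v * ((u - v) ^ 2)⁻¹ :=
            setIntegral_mono_set (hinvδ.1.const_mul (3 * ρ v))
              (Filter.Eventually.of_forall fun u => by positivity)
              (Filter.Eventually.of_forall hAsub)
        _ = 3 * ρ v * (2 / δ) := by
            rw [integral_const_mul, hinvδ.2]
        _ = 6 * ρ v / δ := by ring
    have hfar : (∫ u in {u : ℝ | r ≤ |u - v|}, ρ u / |u - v| ^ 2)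
        ≤ 27652 / (1 + |v|) ^ 2 := by
      obtain ⟨q, hqdef⟩ : ∃ q : ℝ, q = (max (|v| - 1) 0) ^ 2 / 8 := ⟨_, rfl⟩
      obtain ⟨M, hM⟩ : ∃ M : ℝ, M = (Real.sqrt (2 * Real.pi))⁻¹ * Real.exp (-q) := ⟨_, rfl⟩
      have hM0 : 0 ≤ M := by rw [hM]; positivity
      have hinv := invsq_set v r hr
      have hgint1 : IntegrableOn (fun u : ℝ => 4 / (1 + |v|) ^ 2 * ρ u)
          {u : ℝ | r ≤ |u - v|} := (hρint.const_mul _).integrableOn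
      have hgint2 : IntegrableOn (fun u : ℝ => M * ((u - v) ^ 2)⁻¹)
          {u : ℝ | r ≤ |u - v|} := hinv.1.const_mul M
      have hpoint : ∀ u ∈ {u : ℝ | r ≤ |u - v|},
          ρ u / |u - v| ^ 2 ≤ 4 / (1 + |v|) ^ 2 * ρ u + M * ((u - v) ^ 2)⁻¹ := by
        intro u hu
        have hu' : r ≤ |u - v| := hu
        have ht : (0:ℝ) < (u - v) ^ 2 := by
          have h0 : u - v ≠ 0 := by
            intro h0
            rw [h0] at hu'
            simp only [abs_zero] at hu'
            linarith
          positivity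
        rcases le_or_gt ((|v| - 1) / 2) |u| with hcase | hcase
        · have hρu : ρ u ≤ M := by
            rw [hρ u, hM, hqdef]
            apply mul_le_mul_of_nonneg_left _ (by positivity)
            apply Real.exp_le_exp.2
            rcases le_total (|v| - 1) 0 with hc | hc
            · rw [max_eq_right hc]
              nlinarith [sq_nonneg u]
            · rw [max_eq_left hc]
              nlinarith [abs_nonneg u, sq_abs u, hcase]
          have : ρ u / |u - v| ^ 2 ≤ M * ((u - v) ^ 2)⁻¹ := by
            rw [sq_abs, div_eq_mul_inv]
            exact mul_le_mul_of_nonneg_right hρu (by positivity)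
          have h4 : 0 ≤ 4 / (1 + |v|) ^ 2 * ρ u :=
            mul_nonneg (by positivity) (hρ0 u)
          linarith
        · have hvu : (1 + |v|) / 2 ≤ |u - v| := by
            have := abs_sub_abs_le_abs_sub v u
            rw [abs_sub_comm v u] at this
            linarith
          have hbig : ((1 + |v|) / 2) ^ 2 ≤ |u - v| ^ 2 :=
            pow_le_pow_left₀ (by positivity) hvu 2
          have : ρ u / |u - v| ^ 2 ≤ 4 / (1 + |v|) ^ 2 * ρ u := by
            calc ρ u / |u - v| ^ 2 ≤ ρ u / ((1 + |v|) / 2) ^ 2 :=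
                  div_le_div_of_nonneg_left (hρ0 u) (by positivity) hbig
              _ = 4 / (1 + |v|) ^ 2 * ρ u := by
                  field_simp
                  ring
          have h4 : 0 ≤ M * ((u - v) ^ 2)⁻¹ := mul_nonneg hM0 (by positivity)
          linarith
      have hρtot : (∫ u, ρ u) = 1 := by
        have hfe : ρ = fun x : ℝ =>
            (Real.sqrt (2 * Real.pi))⁻¹ * Real.exp (-(1/2 : ℝ) * x ^ 2) := by
          funext x
          rw [hρ]
          ring_nf
        rw [hfe, integral_const_mul, integral_gaussian]
        rw [show Real.pi / (1/2 : ℝ) = 2 * Real.pi by ring]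
        exact inv_mul_cancel₀ (ne_of_gt hpi)
      have hρB : (∫ u in {u : ℝ | r ≤ |u - v|}, ρ u) ≤ 1 := by
        rw [← hρtot]
        exact setIntegral_le_integral hρint (Filter.Eventually.of_forall hρ0)
      have hMb : M * (1 + |v|) ^ 3 ≤ 13824 := by
        have he := expbound |v| (abs_nonneg v)
        have h01 : Real.exp (-q) * Real.exp q = 1 := by
          rw [← Real.exp_add]
          simp
        have hc1 : (Real.sqrt (2 * Real.pi))⁻¹ ≤ 1 := by
          apply inv_le_one_of_one_le₀
          rw [show (1:ℝ) = Real.sqrt 1 by simp]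
          apply Real.sqrt_le_sqrt
          nlinarith [Real.pi_gt_three]
        have h2 : Real.exp (-q) * (1 + |v|) ^ 3 ≤ 13824 := by
          have h3 : Real.exp (-q) * (1 + |v|) ^ 3 ≤ Real.exp (-q) * (13824 * Real.exp q) :=
            mul_le_mul_of_nonneg_left (by rw [hqdef]; exact he) (Real.exp_pos _).le
          have h4 : Real.exp (-q) * (13824 * Real.exp q) = 13824 := by
            rw [show Real.exp (-q) * (13824 * Real.exp q)
              = 13824 * (Real.exp (-q) * Real.exp q) by ring, h01]
            ring
          linarith
        rw [hM]
        calc (Real.sqrt (2 * Real.pi))⁻¹ * Real.exp (-q) * (1 + |v|) ^ 3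
            ≤ 1 * (Real.exp (-q) * (1 + |v|) ^ 3) := by
              rw [show (Real.sqrt (2 * Real.pi))⁻¹ * Real.exp (-q) * (1 + |v|) ^ 3
                = (Real.sqrt (2 * Real.pi))⁻¹ * (Real.exp (-q) * (1 + |v|) ^ 3) by ring]
              exact mul_le_mul_of_nonneg_right hc1 (by positivity)
          _ ≤ 13824 := by linarith
      have step1 : (∫ u in {u : ℝ | r ≤ |u - v|}, ρ u / |u - v| ^ 2)
          ≤ ∫ u in {u : ℝ | r ≤ |u - v|},
              (4 / (1 + |v|) ^ 2 * ρ u + M * ((u - v) ^ 2)⁻¹) :=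
        setIntegral_mono_on hfiB (hgint1.add hgint2) (hSmeas r) hpoint
      have step2 : (∫ u in {u : ℝ | r ≤ |u - v|},
              (4 / (1 + |v|) ^ 2 * ρ u + M * ((u - v) ^ 2)⁻¹))
          = 4 / (1 + |v|) ^ 2 * (∫ u in {u : ℝ | r ≤ |u - v|}, ρ u)
            + M * ∫ u in {u : ℝ | r ≤ |u - v|}, ((u - v) ^ 2)⁻¹ := by
        rw [integral_add hgint1 hgint2, integral_const_mul, integral_const_mul]
      have step3 : 4 / (1 + |v|) ^ 2 * (∫ u in {u : ℝ | r ≤ |u - v|}, ρ u)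
            + M * (∫ u in {u : ℝ | r ≤ |u - v|}, ((u - v) ^ 2)⁻¹)
          ≤ 4 / (1 + |v|) ^ 2 * 1 + M * (2 / r) := by
        gcongr
        exact le_of_eq hinv.2
      have step4 : 4 / (1 + |v|) ^ 2 * 1 + M * (2 / r) ≤ 27652 / (1 + |v|) ^ 2 := by
        rw [hrdef, show (2:ℝ) / (1 + |v|)⁻¹ = 2 * (1 + |v|) by field_simp]
        have e1 : M * (2 * (1 + |v|)) ≤ 27648 / (1 + |v|) ^ 2 := by
          rw [le_div_iff₀ (by positivity)]
          have e0 : M * (2 * (1 + |v|)) * (1 + |v|) ^ 2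
              = 2 * (M * (1 + |v|) ^ 3) := by ring
          linarith
        have e2 : 4 / (1 + |v|) ^ 2 * 1 + 27648 / (1 + |v|) ^ 2
            = 27652 / (1 + |v|) ^ 2 := by ring
        linarith
      exact le_trans step1 (le_trans (le_of_eq step2) (le_trans step3 step4))
    have h1 : 0 ≤ ρ v / δ := div_nonneg (hρ0 v) hδ.le
    have h2 : 6 * ρ v / δ = 6 * (ρ v / δ) := by ring
    have h3 : 27652 * (ρ v / δ + 1 / (1 + |v|) ^ 2)
        = 27652 * (ρ v / δ) + 27652 / (1 + |v|) ^ 2 := by ring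
    linarith [hsplit, hnear, hfar]
end
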